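/- Let G act on a tree T without inversions, and suppose the action is non-trivial (no global fixed vertex) and no element of G shifts any edge (there is no g ∈ G and edge e with e > ge or ge > e). Then G fixes an end of T; equivalently, G is the union of a strictly ascending chain of vertex stabilizers G_{v_1} ≤ G_{v_2} ≤ … along a ray v_1, v_2, … of adjacent vertices. -/

import Mathlib

/-- For directed edges `e = (u,v)` and `f = (u',v')` of a tree `T`, `e > f` means the
smallest subtree containing both consists of a geodesic along which the vertices occur
in the order `u, v, …, u', v'` (so `e` and `f` are coherently oriented). -/
def EdgeGT {V : Type*} (T : SimpleGraph V) (u v u' v' : V) : Prop :=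
  T.Adj u v ∧ T.Adj u' v' ∧
    T.dist u v' = T.dist v u' + 2 ∧
    T.dist u u' = T.dist v u' + 1 ∧
    T.dist v v' = T.dist v u' + 1


open SimpleGraph Walk

section TreeLemmas
variable {V : Type*} {T : SimpleGraph V}

lemma t_path_length (hT : T.IsTree) {x y : V} (p : T.Walk x y) (hp : p.IsPath) :
    p.length = T.dist x y := by
  obtain ⟨q, hq, hlen⟩ := hT.isConnected.exists_path_of_dist x y
  rw [(hT.existsUnique_path x y).unique hp hq, hlen]

lemma t_path_unique (hT : T.IsTree) {x y : V} (p q : T.Walk x y) (hp : p.IsPath)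
    (hq : q.IsPath) : p = q :=
  (hT.existsUnique_path x y).unique hp hq

lemma t_dist_eq_zero (hT : T.IsTree) {x y : V} (h : T.dist x y = 0) : x = y :=
  (hT.isConnected.dist_eq_zero_iff.mp h)

/-- additivity of distance along a path -/
lemma t_mem_support_dist (hT : T.IsTree) {x y u : V} (p : T.Walk x y) (hp : p.IsPath)
    (hu : u ∈ p.support) : T.dist x u + T.dist u y = T.dist x y := by
  classical
  have hsplit := p.take_spec hu
  have h1 : (p.takeUntil u hu).IsPath := hp.takeUntil hu
  have h2 : (p.dropUntil u hu).IsPath := hp.dropUntil hu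
  have hlen := congrArg Walk.length hsplit
  rw [length_append] at hlen
  rw [← t_path_length hT _ h1, ← t_path_length hT _ h2, ← t_path_length hT _ hp]
  exact hlen

/-- Lemma M: a point between x and y at a given distance from x is unique. -/
lemma t_between_unique (hT : T.IsTree) {x y a b : V}
    (ha : T.dist x a + T.dist a y = T.dist x y)
    (hb : T.dist x b + T.dist b y = T.dist x y)
    (hab : T.dist x a = T.dist x b) : a = b := by
  obtain ⟨p1, hp1, hl1⟩ := hT.isConnected.exists_path_of_dist x a
  obtain ⟨p2, hp2, hl2⟩ := hT.isConnected.exists_path_of_dist a y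
  obtain ⟨q1, hq1, hl3⟩ := hT.isConnected.exists_path_of_dist x b
  obtain ⟨q2, hq2, hl4⟩ := hT.isConnected.exists_path_of_dist b y
  have hP : (p1.append p2).IsPath := by
    apply Walk.isPath_of_length_eq_dist
    rw [length_append, hl1, hl2, ha]
  have hQ : (q1.append q2).IsPath := by
    apply Walk.isPath_of_length_eq_dist
    rw [length_append, hl3, hl4, hb]
  have hPQ : p1.append p2 = q1.append q2 := t_path_unique hT _ _ hP hQ
  have hbmem : b ∈ (p1.append p2).support := by
    rw [hPQ]
    exact Walk.mem_support_append_iff _ _ |>.mpr (Or.inl q1.end_mem_support)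
  rcases (Walk.mem_support_append_iff _ _).mp hbmem with hb1 | hb2
  · have := t_mem_support_dist hT p1 hp1 hb1
    have hba : T.dist b a = 0 := by omega
    exact (t_dist_eq_zero hT hba).symm
  · have := t_mem_support_dist hT p2 hp2 hb2
    have hya : T.dist a y = T.dist b y := by omega
    have hab0 : T.dist a b = 0 := by omega
    exact t_dist_eq_zero hT hab0

lemma t_dist_adj (hT : T.IsTree) {x y : V} (h : T.Adj x y) : T.dist x y = 1 :=
  dist_eq_one_iff_adj.mpr h

/-- uniqueness of the neighbor of x toward z -/
lemma t_toward_unique (hT : T.IsTree) {x z w w' : V} (hw : T.Adj x w) (hw' : T.Adj x w')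
    (h : T.dist w z + 1 = T.dist x z) (h' : T.dist w' z + 1 = T.dist x z) : w = w' := by
  apply t_between_unique hT (x := x) (y := z)
  · rw [t_dist_adj hT hw]; omega
  · rw [t_dist_adj hT hw']; omega
  · rw [t_dist_adj hT hw, t_dist_adj hT hw']

/-- stepping lemma: moving across an edge changes distance by exactly one -/
lemma t_dist_step (hT : T.IsTree) {a b c : V} (hbc : T.Adj b c) :
    T.dist a c + 1 = T.dist a b ∨ T.dist a b + 1 = T.dist a c := by
  obtain ⟨p, hp, hl⟩ := hT.isConnected.exists_path_of_dist a b
  by_cases hc : c ∈ p.support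
  · left
    have := t_mem_support_dist hT p hp hc
    have hcb : T.dist c b = 1 := t_dist_adj hT hbc.symm
    omega
  · right
    have hcp : (p.concat hbc).IsPath := by
      rw [Walk.isPath_def, Walk.support_concat]
      have := List.Nodup.concat hc hp.support_nodup
      rwa [List.concat_eq_append] at this
    have := t_path_length hT _ hcp
    rw [Walk.length_concat, hl] at this
    omega

end TreeLemmas

section GroupLemmas
variable {G V : Type*} [Group G] [MulAction G V] {T : SimpleGraph V}

variable (T) in
/-- the graph homomorphism given by the action of `g` -/
def actHom (hact : ∀ (g : G) (u v : V), T.Adj u v → T.Adj (g • u) (g • v)) (g : G) : T →g T where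
  toFun := fun x => g • x
  map_rel' := fun h => hact g _ _ h

@[simp] lemma actHom_apply (hact : ∀ (g : G) (u v : V), T.Adj u v → T.Adj (g • u) (g • v))
    (g : G) (x : V) : actHom T hact g x = g • x := rfl

/-- the image of a walk under the action of `g` -/
def smulWalk (hact : ∀ (g : G) (u v : V), T.Adj u v → T.Adj (g • u) (g • v)) (g : G) {x y : V} (p : T.Walk x y) : T.Walk (g • x) (g • y) :=
  p.map (actHom T hact g)

lemma smulWalk_length (hact : ∀ (g : G) (u v : V), T.Adj u v → T.Adj (g • u) (g • v)) (g : G) {x y : V} (p : T.Walk x y) :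
    (smulWalk hact g p).length = p.length := Walk.length_map _ _

lemma smulWalk_isPath (hact : ∀ (g : G) (u v : V), T.Adj u v → T.Adj (g • u) (g • v)) (g : G) {x y : V} (p : T.Walk x y) (hp : p.IsPath) :
    (smulWalk hact g p).IsPath :=
  Walk.map_isPath_of_injective (MulAction.injective g) hp

lemma smulWalk_support (hact : ∀ (g : G) (u v : V), T.Adj u v → T.Adj (g • u) (g • v)) (g : G) {x y : V} (p : T.Walk x y) :
    (smulWalk hact g p).support = p.support.map (fun z => g • z) := Walk.support_map _ _

lemma t_smul_dist (hT : T.IsTree) (hact : ∀ (g : G) (u v : V), T.Adj u v → T.Adj (g • u) (g • v)) (g : G) (x y : V) : T.dist (g • x) (g • y) = T.dist x y := by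
  have key : ∀ (h : G) (a b : V), T.dist (h • a) (h • b) ≤ T.dist a b := by
    intro h a b
    obtain ⟨p, hp, hl⟩ := hT.isConnected.exists_path_of_dist a b
    calc T.dist (h • a) (h • b) ≤ (smulWalk hact h p).length := SimpleGraph.dist_le _
    _ = p.length := smulWalk_length hact h p
    _ = T.dist a b := hl
  refine le_antisymm (key g x y) ?_
  have := key g⁻¹ (g • x) (g • y)
  simpa using this

private lemma list_map_eq_self {α : Type*} (f : α → α) :
    ∀ l : List α, l.map f = l → ∀ x ∈ l, f x = x := by
  intro l
  induction l with
  | nil => intro _ x hx; simp at hx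
  | cons a l ih =>
    intro h x hx
    simp only [List.map_cons, List.cons.injEq] at h
    rcases List.mem_cons.mp hx with rfl | hx
    · exact h.1
    · exact ih h.2 x hx

/-- every vertex on the path between two fixed vertices is fixed -/
lemma t_fix_path (hT : T.IsTree) (hact : ∀ (g : G) (u v : V), T.Adj u v → T.Adj (g • u) (g • v)) {g : G} {y1 y2 u : V} (hy1 : g • y1 = y1) (hy2 : g • y2 = y2)
    (p : T.Walk y1 y2) (hp : p.IsPath) (hu : u ∈ p.support) : g • u = u := by
  have hq : ((smulWalk hact g p).copy hy1 hy2).IsPath :=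
    (Walk.isPath_copy _ _ _).mpr (smulWalk_isPath hact g p hp)
  have heq : (smulWalk hact g p).copy hy1 hy2 = p := t_path_unique hT _ _ hq hp
  have hsupp : p.support.map (fun z => g • z) = p.support := by
    rw [← smulWalk_support hact g p, ← Walk.support_copy (smulWalk hact g p) hy1 hy2, heq]
  exact list_map_eq_self _ _ hsupp u hu


/-- all fixed points of `g` lie behind a single neighbor of an unfixed vertex -/
lemma t_dir (hT : T.IsTree) (hact : ∀ (g : G) (u v : V), T.Adj u v → T.Adj (g • u) (g • v))
    {g : G} {v y0 : V} (hg : g • v ≠ v) (hy0 : g • y0 = y0) :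
    ∃ w, T.Adj v w ∧ ∀ y, g • y = y → T.dist w y + 1 = T.dist v y := by
  classical
  have hvy0 : v ≠ y0 := by rintro rfl; exact hg hy0
  obtain ⟨p, hp, hl⟩ := hT.isConnected.exists_path_of_dist v y0
  cases p with
  | nil => exact absurd rfl hvy0
  | @cons _ w _ h q =>
    rw [Walk.cons_isPath_iff] at hp
    obtain ⟨hq, hvq⟩ := hp
    rw [Walk.length_cons] at hl
    have hdwy0 : T.dist w y0 = q.length := (t_path_length hT q hq).symm
    have cons_dist : ∀ z ∈ q.support, T.dist w z + 1 = T.dist v z := by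
      intro z hz
      have h1 : (q.takeUntil z hz).IsPath := hq.takeUntil hz
      have h2 : (Walk.cons h (q.takeUntil z hz)).IsPath :=
        h1.cons (fun hv => hvq (Walk.support_takeUntil_subset _ hz hv))
      have l1 := t_path_length hT _ h1
      have l2 := t_path_length hT _ h2
      rw [Walk.length_cons, l1] at l2
      exact l2
    refine ⟨w, h, ?_⟩
    intro y hy
    have hvy : v ≠ y := by rintro rfl; exact hg hy
    obtain ⟨p', hp', hl'⟩ := hT.isConnected.exists_path_of_dist v y
    cases p' with
    | nil => exact absurd rfl hvy
    | @cons _ w' _ h' q' =>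
      rw [Walk.cons_isPath_iff] at hp'
      obtain ⟨hq', hvq'⟩ := hp'
      rw [Walk.length_cons] at hl'
      have hdwy : T.dist w' y = q'.length := (t_path_length hT q' hq').symm
      have cons_dist' : ∀ z ∈ q'.support, T.dist w' z + 1 = T.dist v z := by
        intro z hz
        have h1 : (q'.takeUntil z hz).IsPath := hq'.takeUntil hz
        have h2 : (Walk.cons h' (q'.takeUntil z hz)).IsPath :=
          h1.cons (fun hv => hvq' (Walk.support_takeUntil_subset _ hz hv))
        have l1 := t_path_length hT _ h1
        have l2 := t_path_length hT _ h2
        rw [Walk.length_cons, l1] at l2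
        exact l2
      by_cases hww : w = w'
      · subst hww; omega
      · exfalso
        -- build a path from y0 to y through v
        have hdisj : ∀ u ∈ (Walk.cons h q).support, u ∉ q'.support := by
          intro u hu hu'
          rw [Walk.support_cons, List.mem_cons] at hu
          rcases hu with rfl | hu
          · exact hvq' hu'
          · exact hww (t_toward_unique hT h h' (cons_dist u hu) (cons_dist' u hu'))
        have hR : ((Walk.cons h q).reverse.append (Walk.cons h' q')).IsPath := by
          simp only [Walk.isPath_def, Walk.support_append, Walk.support_reverse,
            Walk.support_cons, List.tail_cons]
          refine List.Nodup.append ?_ hq'.support_nodup ?_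
          · rw [List.nodup_reverse]
            have : (Walk.cons h q).IsPath := (Walk.cons_isPath_iff h q).mpr ⟨hq, hvq⟩
            simpa [Walk.support_cons] using this.support_nodup
          · intro u hu hu'
            exact hdisj u (List.mem_reverse.mp hu) hu'
        have hv : v ∈ ((Walk.cons h q).reverse.append (Walk.cons h' q')).support := by
          rw [Walk.mem_support_append_iff]
          left
          rw [Walk.support_reverse, List.mem_reverse]
          exact Walk.start_mem_support _
        exact hg (t_fix_path hT hact hy0 hy _ hR hv)

/-- the gate (projection) lemma: there is a fixed point `p` through which all geodesics
to fixed points pass -/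
lemma t_gate (hT : T.IsTree) (hact : ∀ (g : G) (u v : V), T.Adj u v → T.Adj (g • u) (g • v))
    {g : G} {y0 : V} (hy0 : g • y0 = y0) (x : V) :
    ∃ p, g • p = p ∧ ∀ y, g • y = y → T.dist x y = T.dist x p + T.dist p y := by
  suffices H : ∀ n x, T.dist x y0 = n →
      ∃ p, g • p = p ∧ ∀ y, g • y = y → T.dist x y = T.dist x p + T.dist p y from H _ x rfl
  intro n
  induction n using Nat.strong_induction_on with
  | _ n ih =>
    intro x hn
    by_cases hx : g • x = x
    · exact ⟨x, hx, fun y hy => by simp⟩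
    · obtain ⟨w, hw, hdir⟩ := t_dir hT hact hx hy0
      have h0 := hdir y0 hy0
      obtain ⟨p, hp, hgate⟩ := ih (T.dist w y0) (by omega) w rfl
      refine ⟨p, hp, fun y hy => ?_⟩
      have h1 := hdir y hy
      have h2 := hgate y hy
      have h3 := hdir p hp
      omega

end GroupLemmas

section GroupLemmas2
variable {G V : Type*} [Group G] [MulAction G V] {T : SimpleGraph V}

lemma t_cons_dist (hT : T.IsTree) {v w y : V} (h : T.Adj v w) (q : T.Walk w y)
    (hq : q.IsPath) (hv : v ∉ q.support) :
    ∀ z ∈ q.support, T.dist w z + 1 = T.dist v z := by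
  classical
  intro z hz
  have h1 : (q.takeUntil z hz).IsPath := hq.takeUntil hz
  have h2 : (Walk.cons h (q.takeUntil z hz)).IsPath :=
    h1.cons (fun hvv => hv (Walk.support_takeUntil_subset _ hz hvv))
  have l1 := t_path_length hT _ h1
  have l2 := t_path_length hT _ h2
  rw [Walk.length_cons, l1] at l2
  exact l2

/-- reflection: distance to the image is twice distance to the gate -/
lemma t_reflect (hT : T.IsTree) (hact : ∀ (g : G) (u v : V), T.Adj u v → T.Adj (g • u) (g • v))
    {g : G} {x p : V} (hgx : g • x ≠ x) (hfp : g • p = p)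
    (hgate : ∀ y, g • y = y → T.dist x y = T.dist x p + T.dist p y) :
    T.dist x (g • x) = T.dist x p + T.dist x p ∧ T.dist p (g • x) = T.dist x p := by
  classical
  have hpx : p ≠ x := by rintro rfl; exact hgx hfp
  have h2 : T.dist p (g • x) = T.dist x p := by
    have hh : T.dist (g • p) (g • x) = T.dist p x := t_smul_dist hT hact g p x
    rw [hfp] at hh
    rw [hh, SimpleGraph.dist_comm]
  refine ⟨?_, h2⟩
  obtain ⟨A, hA, hlA⟩ := hT.isConnected.exists_path_of_dist p x
  cases A with
  | nil => exact absurd rfl hpx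
  | @cons _ s _ h q =>
    rw [Walk.cons_isPath_iff] at hA
    obtain ⟨hq, hpq⟩ := hA
    rw [Walk.length_cons] at hlA
    have cons_dist := t_cons_dist hT h q hq hpq
    have hdsx : T.dist s x = q.length := (t_path_length hT q hq).symm
    have hs : g • s ≠ s := by
      intro hfs
      have e1 := hgate s hfs
      have e3 : T.dist p s = 1 := t_dist_adj hT h
      have c1 : T.dist x s = T.dist s x := SimpleGraph.dist_comm ..
      have c2 : T.dist x p = T.dist p x := SimpleGraph.dist_comm ..
      omega
    have hApath : (Walk.cons h q).IsPath := (Walk.cons_isPath_iff h q).mpr ⟨hq, hpq⟩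
    have hBpath : ((smulWalk hact g (Walk.cons h q)).copy hfp rfl).IsPath :=
      (Walk.isPath_copy _ _ _).mpr (smulWalk_isPath hact g _ hApath)
    have hBsupp : ((smulWalk hact g (Walk.cons h q)).copy hfp rfl).support
        = (g • p) :: (q.support.map (fun z => g • z)) := by
      rw [Walk.support_copy, smulWalk_support]
      simp [Walk.support_cons]
    have hdisj : ∀ u ∈ (Walk.cons h q).support, u ∉ q.support.map (fun z => g • z) := by
      intro u hu hu'
      obtain ⟨t, ht, rfl⟩ := List.mem_map.mp hu'
      rw [Walk.support_cons, List.mem_cons] at hu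
      rcases hu with hu | hu
      · -- g • t = p forces t = p ∈ q.support, contradiction
        have hfp' : g⁻¹ • p = p := by
          conv_lhs => rw [← hfp, inv_smul_smul]
        have h5 := congrArg (fun z => g⁻¹ • z) hu
        simp only [inv_smul_smul] at h5
        rw [h5, hfp'] at ht
        exact hpq ht
      · have d1 := cons_dist _ hu
        have d2 := cons_dist _ ht
        have d3 : T.dist (g • s) (g • t) = T.dist s t := t_smul_dist hT hact g s t
        have d4 : T.dist p (g • t) = T.dist p t := by
          conv_lhs => rw [← hfp]
          exact t_smul_dist hT hact g p t
        have d5 : T.dist (g • s) (g • t) + 1 = T.dist p (g • t) := by omega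
        have hadj : T.Adj p (g • s) := by
          have := hact g p s h
          rwa [hfp] at this
        exact hs (t_toward_unique hT h hadj d1 d5).symm
    have hW : ((Walk.cons h q).reverse.append
        ((smulWalk hact g (Walk.cons h q)).copy hfp rfl)).IsPath := by
      rw [Walk.isPath_def, Walk.support_append, hBsupp, List.tail_cons, Walk.support_reverse]
      refine List.Nodup.append ?_ ?_ ?_
      · rw [List.nodup_reverse]
        exact hApath.support_nodup
      · exact hq.support_nodup.map (MulAction.injective g)
      · intro u hu hu'
        exact hdisj u (List.mem_reverse.mp hu) hu'
    have hlen := t_path_length hT _ hW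
    rw [Walk.length_append, Walk.length_reverse, Walk.length_copy] at hlen
    have hlB : (smulWalk hact g (Walk.cons h q)).length = q.length + 1 := by
      rw [smulWalk_length, Walk.length_cons]
    rw [hlB, Walk.length_cons] at hlen
    have c1 : T.dist x p = T.dist p x := SimpleGraph.dist_comm ..
    omega

end GroupLemmas2

section Elliptic
variable {G V : Type*} [Group G] [MulAction G V] {T : SimpleGraph V}

lemma t_elliptic (hT : T.IsTree) (hact : ∀ (g : G) (u v : V), T.Adj u v → T.Adj (g • u) (g • v))
    (hninv : ∀ (g : G) (u v : V), T.Adj u v → ¬(g • u = v ∧ g • v = u))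
    (hnoshift : ∀ (g : G) (u v : V), T.Adj u v →
      ¬ EdgeGT T u v (g • u) (g • v) ∧ ¬ EdgeGT T (g • u) (g • v) u v)
    (g : G) : ∃ x : V, g • x = x := by
  classical
  by_contra hc
  push_neg at hc
  obtain ⟨x0⟩ : Nonempty V := hT.isConnected.nonempty
  set S : Set ℕ := Set.range (fun x : V => T.dist x (g • x)) with hS
  have hSne : S.Nonempty := ⟨_, ⟨x0, rfl⟩⟩
  obtain ⟨x, hx⟩ := Nat.sInf_mem hSne
  have hmin : ∀ z : V, sInf S ≤ T.dist z (g • z) := fun z => Nat.sInf_le ⟨z, rfl⟩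
  set n := sInf S with hn
  have hn1 : 1 ≤ n := by
    rcases Nat.eq_zero_or_pos n with h0 | h1
    · rw [h0] at hx
      exact absurd (t_dist_eq_zero hT hx).symm (hc x)
    · exact h1
  have hx' : T.dist x (g • x) = n := hx
  obtain ⟨y, hy⟩ : ∃ y, g • x = y := ⟨_, rfl⟩
  rw [hy] at hx'
  obtain ⟨p, hp, hl⟩ := hT.isConnected.exists_path_of_dist x y
  clear hx
  cases p with
  | nil => exact hc x hy
  | @cons _ w _ h q =>
    rw [Walk.cons_isPath_iff] at hp
    obtain ⟨hq, hxq⟩ := hp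
    rw [Walk.length_cons] at hl
    have hdxy : T.dist x y = q.length + 1 := hl.symm
    have hnm : n = q.length + 1 := by omega -- hx'
    have hdwy : T.dist w y = q.length := (t_path_length hT q hq).symm
    have hdygw : T.dist y (g • w) = 1 := by
      rw [← hy]
      rw [t_smul_dist hT hact g x w]
      exact t_dist_adj hT h
    have hdwgw : T.dist w (g • w) = n := by
      refine le_antisymm ?_ (hmin w)
      calc T.dist w (g • w) ≤ T.dist w y + T.dist y (g • w) := hT.isConnected.dist_triangle
      _ = q.length + 1 := by rw [hdwy, hdygw]
      _ = n := hnm.symm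
    have hadj_im : T.Adj y (g • w) := by rw [← hy]; exact hact g x w h
    rcases t_dist_step hT (a := x) hadj_im with hA | hB
    · -- dist x (g•w) = q.length
      rw [hdxy] at hA
      rcases Nat.eq_zero_or_pos q.length with hm0 | hm1
      · -- inversion case
        rw [hm0] at hdwy hA
        have hwy : w = y := t_dist_eq_zero hT hdwy
        have hxgw : x = g • w := t_dist_eq_zero hT (by omega)
        exact hninv g x w h ⟨by rw [hy, hwy], hxgw.symm⟩
      · -- find the penultimate vertex
        obtain ⟨P2, hP2, hl2⟩ := hT.isConnected.exists_path_of_dist y x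
        cases P2 with
        | nil =>
          rw [SimpleGraph.dist_comm, hdxy] at hl2
          simp at hl2
        | @cons _ t _ h2 q2 =>
          rw [Walk.cons_isPath_iff] at hP2
          obtain ⟨hq2, hyq2⟩ := hP2
          rw [Walk.length_cons, SimpleGraph.dist_comm, hdxy] at hl2
          have hdtx : T.dist t x = q2.length := (t_path_length hT q2 hq2).symm
          have hgwt : g • w = t := by
            apply t_between_unique hT (x := x) (y := y)
            · have : T.dist (g • w) y = 1 := by rw [SimpleGraph.dist_comm]; exact hdygw
              omega
            · have c1 : T.dist x t = q2.length := by rw [SimpleGraph.dist_comm]; exact hdtx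
              have c2 : T.dist t y = 1 := by
                rw [SimpleGraph.dist_comm]
                exact t_dist_adj hT h2
              omega
            · have c1 : T.dist x t = q2.length := by rw [SimpleGraph.dist_comm]; exact hdtx
              omega
          -- w lies on q2
          have hP2eq : Walk.cons h2 q2 = (Walk.cons h q).reverse := by
            apply t_path_unique hT
            · exact (Walk.cons_isPath_iff h2 q2).mpr ⟨hq2, hyq2⟩
            · exact ((Walk.cons_isPath_iff h q).mpr ⟨hq, hxq⟩).reverse
          have hwmem : w ∈ (Walk.cons h2 q2).support := by
            rw [hP2eq, Walk.support_reverse, List.mem_reverse, Walk.support_cons]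
            exact List.mem_cons_of_mem _ (Walk.start_mem_support q)
          rw [Walk.support_cons, List.mem_cons] at hwmem
          rcases hwmem with hwy | hwmem
          · have hz : T.dist w y = 0 := by rw [hwy]; simp
            omega
          · have hsplit := t_mem_support_dist hT q2 hq2 hwmem
            have hdwx : T.dist w x = 1 := by rw [SimpleGraph.dist_comm]; exact t_dist_adj hT h
            rw [hdwx, hdtx] at hsplit
            -- dist t w = q2.length - 1
            have : T.dist w (g • w) = T.dist t w := by rw [hgwt, SimpleGraph.dist_comm]
            omega
    · -- shift case
      rw [hdxy] at hB
      have hEdge : EdgeGT T x w (g • x) (g • w) := by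
        refine ⟨h, hact g x w h, ?_, ?_, ?_⟩ <;> rw [hy] <;> omega
      exact (hnoshift g x w h).1 hEdge

lemma t_common (hT : T.IsTree) (hact : ∀ (g : G) (u v : V), T.Adj u v → T.Adj (g • u) (g • v))
    (hell : ∀ k : G, ∃ z : V, k • z = z) (g h : G) :
    ∃ z : V, g • z = z ∧ h • z = z := by
  obtain ⟨x, hx⟩ := hell (g * h)
  rw [mul_smul] at hx
  by_cases hhx : h • x = x
  · exact ⟨x, by rwa [hhx] at hx, hhx⟩
  · have hginv : g⁻¹ • x = h • x := by
      have h7 := congrArg (fun w => g⁻¹ • w) hx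
      simp only [inv_smul_smul] at h7
      exact h7.symm
    have hgx' : g⁻¹ • x ≠ x := by rw [hginv]; exact hhx
    obtain ⟨yh, hyh⟩ := hell h
    obtain ⟨yg, hyg⟩ := hell g
    obtain ⟨q', hq'fix, hq'gate⟩ := t_gate hT hact hyh x
    obtain ⟨p', hp'fix, hp'gate⟩ := t_gate hT hact hyg x
    have Dh := t_reflect hT hact hhx hq'fix hq'gate
    have hp'fix' : g⁻¹ • p' = p' := by conv_lhs => rw [← hp'fix, inv_smul_smul]
    have hgate' : ∀ z, g⁻¹ • z = z → T.dist x z = T.dist x p' + T.dist p' z := by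
      intro z hz
      apply hp'gate
      have h6 := congrArg (fun w => g • w) hz
      simp only [smul_inv_smul] at h6
      exact h6.symm
    have Dg := t_reflect hT hact hgx' hp'fix' hgate'
    rw [hginv] at Dg
    have hqp : q' = p' := by
      apply t_between_unique hT (x := x) (y := h • x)
      · omega
      · omega
      · omega
    exact ⟨p', hp'fix, hqp ▸ hq'fix⟩

end Elliptic

/-- If `G` acts on a tree `T` without inversions, the action is non-trivial (no global
fixed vertex), and no element of `G` shifts any edge, then `G` fixes an end of `T`:
`G` is the union of an ascending chain of vertex stabilizers, none equal to `G`, along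
a ray of adjacent vertices. -/
theorem stmt_17 {G V : Type*} [Group G] [MulAction G V] (T : SimpleGraph V)
    (hT : T.IsTree) (hact : ∀ (g : G) (u v : V), T.Adj u v → T.Adj (g • u) (g • v))
    (hninv : ∀ (g : G) (u v : V), T.Adj u v → ¬(g • u = v ∧ g • v = u))
    (hnontriv : ¬ ∃ v : V, ∀ g : G, g • v = v)
    (hnoshift : ∀ (g : G) (u v : V), T.Adj u v →
      ¬ EdgeGT T u v (g • u) (g • v) ∧ ¬ EdgeGT T (g • u) (g • v) u v) :
    ∃ v : ℕ → V, Function.Injective v ∧ (∀ n, T.Adj (v n) (v (n + 1))) ∧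
      (∀ n, MulAction.stabilizer G (v n) ≤ MulAction.stabilizer G (v (n + 1))) ∧
      (∀ n, MulAction.stabilizer G (v n) ≠ ⊤) ∧
      (∀ g : G, ∃ n, g ∈ MulAction.stabilizer G (v n)) := by
  classical
  have hell : ∀ k : G, ∃ z : V, k • z = z := t_elliptic hT hact hninv hnoshift
  have hcommon := t_common hT hact hell
  have hmover : ∀ v : V, ∃ g : G, g • v ≠ v := by
    intro v
    by_contra hcon
    push_neg at hcon
    exact hnontriv ⟨v, hcon⟩
  have hNPex : ∀ v : V, ∃ w, T.Adj v w ∧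
      ∀ g : G, g • v ≠ v → ∀ y, g • y = y → T.dist w y + 1 = T.dist v y := by
    intro v
    obtain ⟨g0, hg0⟩ := hmover v
    obtain ⟨y0, hy0⟩ := hell g0
    obtain ⟨w, hw, hdir0⟩ := t_dir hT hact hg0 hy0
    refine ⟨w, hw, ?_⟩
    intro g hg y hy
    obtain ⟨z, hzg0, hzg⟩ := hcommon g0 g
    obtain ⟨w', hw', hdir'⟩ := t_dir hT hact hg hy
    have hww : w = w' := t_toward_unique hT hw hw' (hdir0 z hzg0) (hdir' z hzg)
    rw [hww]
    exact hdir' y hy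
  choose next hadjn hdirn using hNPex
  have hNPuniq : ∀ (v w : V), T.Adj v w →
      (∀ g : G, g • v ≠ v → ∀ y, g • y = y → T.dist w y + 1 = T.dist v y) → w = next v := by
    intro v w hvw hwprop
    obtain ⟨g0, hg0⟩ := hmover v
    obtain ⟨y0, hy0⟩ := hell g0
    exact t_toward_unique hT hvw (hadjn v) (hwprop g0 hg0 y0 hy0) (hdirn v g0 hg0 y0 hy0)
  obtain ⟨v0⟩ : Nonempty V := hT.isConnected.nonempty
  set f : ℕ → V := fun n => next^[n] v0 with hf
  have hfs : ∀ n, f (n + 1) = next (f n) := fun n => Function.iterate_succ_apply' next n v0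
  have hadj : ∀ n, T.Adj (f n) (f (n + 1)) := by
    intro n; rw [hfs]; exact hadjn (f n)
  have hstab : ∀ n, MulAction.stabilizer G (f n) ≤ MulAction.stabilizer G (f (n + 1)) := by
    intro n k hk
    rw [MulAction.mem_stabilizer_iff] at hk ⊢
    rw [hfs]
    have hAdj2 : T.Adj (f n) (k • next (f n)) := by
      have := hact k (f n) (next (f n)) (hadjn (f n))
      rwa [hk] at this
    have hprop : ∀ g : G, g • (f n) ≠ f n → ∀ y, g • y = y →
        T.dist (k • next (f n)) y + 1 = T.dist (f n) y := by
      intro g hg y hy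
      have hg' : (k⁻¹ * g * k) • (f n) ≠ f n := by
        intro hcon
        apply hg
        have h8 := congrArg (fun z => k • z) hcon
        simp only [mul_smul, smul_inv_smul] at h8
        rwa [hk] at h8
      have hy' : (k⁻¹ * g * k) • (k⁻¹ • y) = k⁻¹ • y := by
        simp only [mul_smul, smul_inv_smul, hy]
      have base := hdirn (f n) (k⁻¹ * g * k) hg' (k⁻¹ • y) hy'
      have d1 := t_smul_dist hT hact k (next (f n)) (k⁻¹ • y)
      rw [smul_inv_smul] at d1
      have d2 := t_smul_dist hT hact k (f n) (k⁻¹ • y)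
      rw [hk, smul_inv_smul] at d2
      omega
    exact hNPuniq (f n) (k • next (f n)) hAdj2 hprop
  have hproper : ∀ n, MulAction.stabilizer G (f n) ≠ ⊤ := by
    intro n htop
    obtain ⟨g, hg⟩ := hmover (f n)
    apply hg
    have : g ∈ MulAction.stabilizer G (f n) := by rw [htop]; trivial
    exact MulAction.mem_stabilizer_iff.mp this
  have hunion : ∀ g : G, ∃ n, g ∈ MulAction.stabilizer G (f n) := by
    intro g
    by_contra hcon
    push_neg at hcon
    have hmove : ∀ n, g • f n ≠ f n := fun n hfix =>
      hcon n (MulAction.mem_stabilizer_iff.mpr hfix)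
    obtain ⟨y0, hy0⟩ := hell g
    have hdec : ∀ n, T.dist (f (n + 1)) y0 + 1 = T.dist (f n) y0 := by
      intro n; rw [hfs]; exact hdirn (f n) g (hmove n) y0 hy0
    have hbound : ∀ n, T.dist (f n) y0 + n ≤ T.dist (f 0) y0 := by
      intro n
      induction n with
      | zero => simp
      | succ m ih => have := hdec m; omega
    have := hbound (T.dist (f 0) y0 + 1)
    omega
  have hnb : ∀ n, f (n + 2) ≠ f n := by
    intro n heq
    obtain ⟨g, hg⟩ := hmover (f (n + 1))
    obtain ⟨y, hy⟩ := hell g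
    have e1 : T.dist (f (n + 2)) y + 1 = T.dist (f (n + 1)) y := by
      rw [hfs]; exact hdirn (f (n + 1)) g hg y hy
    have hgn : g • f n ≠ f n := by
      intro hfix
      exact hg (MulAction.mem_stabilizer_iff.mp
        (hstab n (MulAction.mem_stabilizer_iff.mpr hfix)))
    have e2 : T.dist (f (n + 1)) y + 1 = T.dist (f n) y := by
      rw [hfs]; exact hdirn (f n) g hgn y hy
    rw [heq] at e1
    omega
  have hdist : ∀ n, ∀ i j, i ≤ j → j ≤ n → T.dist (f i) (f j) = j - i := by
    intro n
    induction n with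
    | zero =>
      intro i j hij hj
      have hi0 : i = 0 := by omega
      have hj0 : j = 0 := by omega
      subst hi0; subst hj0
      simp
    | succ m ih =>
      intro i j hij hjm
      rcases Nat.lt_or_ge j (m + 1) with hj | hj
      · exact ih i j hij (by omega)
      · have hj1 : j = m + 1 := by omega
        subst hj1
        rcases Nat.eq_or_lt_of_le hij with rfl | hilt
        · simp
        · have hile : i ≤ m := by omega
          rcases Nat.eq_or_lt_of_le hile with rfl | himlt
          · rw [t_dist_adj hT (hadj i)]
            omega
          · have dim : T.dist (f i) (f m) = m - i := ih i m (by omega) le_rfl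
            rcases t_dist_step hT (a := f i) (hadj m) with hA | hB
            · exfalso
              have dim1 : T.dist (f i) (f (m - 1)) = m - 1 - i := ih i (m - 1) (by omega) (by omega)
              have hadj' := hadj (m - 1)
              rw [show m - 1 + 1 = m by omega] at hadj'
              have hback : f (m + 1) = f (m - 1) := by
                apply t_between_unique hT (x := f i) (y := f m)
                · have hc : T.dist (f (m + 1)) (f m) = 1 := by
                    rw [SimpleGraph.dist_comm]; exact t_dist_adj hT (hadj m)
                  omega
                · have hc : T.dist (f (m - 1)) (f m) = 1 := t_dist_adj hT hadj'
                  omega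
                · omega
              have hn2 := hnb (m - 1)
              rw [show m - 1 + 2 = m + 1 by omega] at hn2
              exact hn2 hback
            · omega
  have hinj : Function.Injective f := by
    intro a b hab
    rcases Nat.lt_trichotomy a b with h | h | h
    · exfalso
      have := hdist b a b h.le le_rfl
      rw [hab, SimpleGraph.dist_self] at this
      omega
    · exact h
    · exfalso
      have := hdist a b a h.le le_rfl
      rw [← hab, SimpleGraph.dist_self] at this
      omega
  exact ⟨f, hinj, hadj, hstab, hproper, hunion⟩
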